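/- Balanceable Bernstein condition for weighted heteroscedastic regression: let 0 < c₃ < 1, 0 < γ ≤ 1, suppose c₃ ≤ σ*²(x) ≤ 1/γ for all x, let f : 𝒳 → [−1,1] be measurable, and set C = 1/(2(1 + 4/c₃)). With y = f*(x) + √(σ*²(x))·ξ, the weighted excess squared loss Z(x,ξ) = C·((y − f(x))² − (y − f*(x))²)/σ*²(x) on (𝒳 × ℝ, μ ⊗ ρ) satisfies Var[Z] ≤ E[Z]. -/

import Mathlib

open MeasureTheory

/-- Balanceable Bernstein condition for weighted heteroscedastic regression: with
`C = 1/(2(1 + 4/c₃))`, `y = f*(x) + √(σ*²(x))·ξ` and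
`Z(x,ξ) = C·((y − f x)² − (y − f* x)²)/σ*²(x)` on `(𝒳 × ℝ, μ ⊗ ρ)`,
if `c₃ ≤ σ*²(x) ≤ 1/γ` then `Var[Z] ≤ E[Z]`. -/
theorem balanceable_bernstein_heteroscedastic_regression
    {𝒳 : Type*} [MeasurableSpace 𝒳]
    (μ : Measure 𝒳) [IsProbabilityMeasure μ]
    (c₂ : ℝ) (hc₂ : 1 ≤ c₂)
    (ρ : Measure ℝ) [IsProbabilityMeasure ρ]
    (hρsupp : ∀ᵐ s ∂ρ, s ∈ Set.Icc (-c₂) c₂)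
    (hρmean : ∫ s, s ∂ρ = 0) (hρvar : ∫ s, s ^ 2 ∂ρ = 1)
    (fstar : 𝒳 → ℝ) (hfstar : Measurable fstar) (hfstar1 : ∀ x, fstar x ∈ Set.Icc (-1 : ℝ) 1)
    (σsq : 𝒳 → ℝ) (hσsq : Measurable σsq)
    (c₃ γ : ℝ) (hc₃0 : 0 < c₃) (hc₃1 : c₃ < 1) (hγ0 : 0 < γ) (hγ1 : γ ≤ 1)
    (hσsqlb : ∀ x, c₃ ≤ σsq x) (hσsqub : ∀ x, σsq x ≤ 1 / γ)
    (f : 𝒳 → ℝ) (hf : Measurable f) (hf1 : ∀ x, f x ∈ Set.Icc (-1 : ℝ) 1) :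
    (∫ q : 𝒳 × ℝ,
        ((1 / (2 * (1 + 4 / c₃))) *
          (((fstar q.1 + Real.sqrt (σsq q.1) * q.2 - f q.1) ^ 2
            - (fstar q.1 + Real.sqrt (σsq q.1) * q.2 - fstar q.1) ^ 2) / σsq q.1)) ^ 2 ∂(μ.prod ρ))
      - (∫ q : 𝒳 × ℝ,
          (1 / (2 * (1 + 4 / c₃))) *
            (((fstar q.1 + Real.sqrt (σsq q.1) * q.2 - f q.1) ^ 2
              - (fstar q.1 + Real.sqrt (σsq q.1) * q.2 - fstar q.1) ^ 2) / σsq q.1) ∂(μ.prod ρ)) ^ 2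
      ≤ ∫ q : 𝒳 × ℝ,
          (1 / (2 * (1 + 4 / c₃))) *
            (((fstar q.1 + Real.sqrt (σsq q.1) * q.2 - f q.1) ^ 2
              - (fstar q.1 + Real.sqrt (σsq q.1) * q.2 - fstar q.1) ^ 2) / σsq q.1) ∂(μ.prod ρ) := by
  set C : ℝ := 1 / (2 * (1 + 4 / c₃)) with hCdef
  have hC0 : 0 < C := by rw [hCdef]; positivity
  have hσpos : ∀ x, 0 < σsq x := fun x => lt_of_lt_of_le hc₃0 (hσsqlb x)
  set d : 𝒳 → ℝ := fun x => fstar x - f x with hd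
  set g : 𝒳 → ℝ := fun x => Real.sqrt (σsq x) with hg
  have hg0 : ∀ x, 0 ≤ g x := fun x => Real.sqrt_nonneg _
  have hgsq : ∀ x, g x ^ 2 = σsq x := fun x => Real.sq_sqrt (hσpos x).le
  have hgub : ∀ x, g x ≤ Real.sqrt (1 / γ) := fun x => Real.sqrt_le_sqrt (hσsqub x)
  have hdbd : ∀ x, |d x| ≤ 2 := by
    intro x
    have h1 := hfstar1 x; have h2 := hf1 x
    rw [abs_le]
    constructor <;> simp only [hd] <;> [linarith [h1.1, h2.2]; linarith [h1.2, h2.1]]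
  set F : 𝒳 × ℝ → ℝ :=
    fun q => C * ((d q.1) ^ 2 + 2 * d q.1 * g q.1 * q.2) / σsq q.1 with hF
  have horig : ∀ q : 𝒳 × ℝ,
      C * (((fstar q.1 + Real.sqrt (σsq q.1) * q.2 - f q.1) ^ 2
        - (fstar q.1 + Real.sqrt (σsq q.1) * q.2 - fstar q.1) ^ 2) / σsq q.1) = F q := by
    intro q; simp only [hF, hd, hg]; ring
  simp only [horig]
  -- integrability of s and s^2 w.r.t. ρ
  have hsint : Integrable (fun s : ℝ => s) ρ := by
    refine Integrable.mono' (integrable_const c₂) measurable_id.aestronglyMeasurable ?_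
    filter_upwards [hρsupp] with s hs
    rw [Real.norm_eq_abs, abs_le]; exact ⟨hs.1, hs.2⟩
  have hs2int : Integrable (fun s : ℝ => s ^ 2) ρ := by
    refine Integrable.mono' (integrable_const (c₂ ^ 2))
      (measurable_id.pow_const 2).aestronglyMeasurable ?_
    filter_upwards [hρsupp] with s hs
    rw [Real.norm_eq_abs, abs_pow]
    have : |s| ≤ c₂ := abs_le.mpr ⟨hs.1, hs.2⟩
    exact pow_le_pow_left₀ (abs_nonneg s) this 2
  -- a.e. bound on q.2 for the product measure
  have haeprod : ∀ᵐ q : 𝒳 × ℝ ∂(μ.prod ρ), |q.2| ≤ c₂ := by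
    have hmap : (μ.prod ρ).map Prod.snd = ρ := by
      rw [Measure.map_snd_prod]; simp
    have h : ∀ᵐ s ∂((μ.prod ρ).map Prod.snd), |s| ≤ c₂ := by
      rw [hmap]
      filter_upwards [hρsupp] with s hs
      exact abs_le.mpr ⟨hs.1, hs.2⟩
    exact (ae_map_iff measurable_snd.aemeasurable
      (measurableSet_le (measurable_id.norm) measurable_const)).mp h
  -- measurability of F
  have hgm : Measurable g := by
    simp only [hg]; exact Real.continuous_sqrt.measurable.comp hσsq
  have hdm : Measurable d := by simp only [hd]; exact hfstar.sub hf
  have hFm : Measurable F := by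
    simp only [hF]
    exact (measurable_const.mul (((hdm.comp measurable_fst).pow_const 2).add
      (((measurable_const.mul (hdm.comp measurable_fst)).mul
        (hgm.comp measurable_fst)).mul measurable_snd))).div (hσsq.comp measurable_fst)
  -- bound on F
  set N : ℝ := 4 + 4 * Real.sqrt (1 / γ) * c₂ with hN
  have hsq0 : (0:ℝ) ≤ Real.sqrt (1 / γ) := Real.sqrt_nonneg _
  have hN0 : 0 ≤ N := by rw [hN]; nlinarith
  set M : ℝ := C * (N / c₃) with hM
  have hbd : ∀ᵐ q : 𝒳 × ℝ ∂(μ.prod ρ), ‖F q‖ ≤ M := by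
    filter_upwards [haeprod] with q hq
    have hnum : |(d q.1) ^ 2 + 2 * d q.1 * g q.1 * q.2| ≤ N := by
      have h1 : |(d q.1) ^ 2| ≤ 4 := by
        rw [abs_pow]
        calc |d q.1| ^ 2 ≤ 2 ^ 2 := pow_le_pow_left₀ (abs_nonneg _) (hdbd q.1) 2
        _ = 4 := by norm_num
      have h2 : |2 * d q.1 * g q.1 * q.2| ≤ 2 * 2 * Real.sqrt (1 / γ) * c₂ := by
        rw [abs_mul, abs_mul, abs_mul, abs_two]
        have hga : |g q.1| = g q.1 := abs_of_nonneg (hg0 q.1)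
        rw [hga]
        have hc20 : (0:ℝ) ≤ c₂ := by linarith
        gcongr <;> first
          | exact hdbd q.1
          | exact hgub q.1
          | exact hq
          | positivity
      calc |(d q.1) ^ 2 + 2 * d q.1 * g q.1 * q.2|
          ≤ |(d q.1) ^ 2| + |2 * d q.1 * g q.1 * q.2| := abs_add_le _ _
        _ ≤ 4 + 2 * 2 * Real.sqrt (1 / γ) * c₂ := by linarith
        _ = N := by rw [hN]; ring
    have : ‖F q‖ = C * |(d q.1) ^ 2 + 2 * d q.1 * g q.1 * q.2| / σsq q.1 := by
      simp only [hF]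
      rw [Real.norm_eq_abs, abs_div, abs_mul, abs_of_pos hC0, abs_of_pos (hσpos q.1)]
    rw [this, hM, mul_div_assoc]
    exact mul_le_mul_of_nonneg_left
      (div_le_div₀ hN0 hnum hc₃0 (hσsqlb q.1)) hC0.le
  have hFint : Integrable F (μ.prod ρ) :=
    Integrable.mono' (integrable_const M) hFm.aestronglyMeasurable hbd
  have hF2int : Integrable (fun q => F q ^ 2) (μ.prod ρ) := by
    refine Integrable.mono' (integrable_const (M ^ 2))
      (hFm.pow_const 2).aestronglyMeasurable ?_
    filter_upwards [hbd] with q hq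
    rw [Real.norm_eq_abs, abs_pow]
    exact pow_le_pow_left₀ (abs_nonneg _) hq 2
  -- conditional means
  set φ : 𝒳 → ℝ := fun x => C * (d x) ^ 2 / σsq x with hφ
  set ψ : 𝒳 → ℝ := fun x => (C * (d x) ^ 2 / σsq x) ^ 2 + 4 * C ^ 2 * (d x) ^ 2 / σsq x with hψ
  have hinner1 : ∀ x, ∫ s, F (x, s) ∂ρ = φ x := by
    intro x
    have he : (fun s : ℝ => F (x, s))
        = fun s => C * (d x) ^ 2 / σsq x + (C * (2 * d x * g x) / σsq x) * s := by
      funext s; simp only [hF]; ring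
    rw [he, integral_add (integrable_const _) (hsint.const_mul _), integral_const,
      integral_const_mul, hρmean]
    simp [hφ]
  have hinner2 : ∀ x, ∫ s, F (x, s) ^ 2 ∂ρ = ψ x := by
    intro x
    set A : ℝ := C * (d x) ^ 2 / σsq x with hA
    set B : ℝ := C * (2 * d x * g x) / σsq x with hB
    have he : (fun s : ℝ => F (x, s) ^ 2)
        = fun s => (A ^ 2 + (2 * A * B) * s) + B ^ 2 * s ^ 2 := by
      funext s; simp only [hF, hA, hB]; ring
    have hi1 : Integrable (fun s : ℝ => A ^ 2 + 2 * A * B * s) ρ :=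
      (integrable_const _).add (hsint.const_mul _)
    have hi2 : Integrable (fun s : ℝ => B ^ 2 * s ^ 2) ρ := hs2int.const_mul _
    rw [he, integral_add hi1 hi2,
      integral_add (integrable_const _) (hsint.const_mul _), integral_const,
      integral_const_mul, integral_const_mul, hρmean, hρvar]
    have hBsq : B ^ 2 = 4 * C ^ 2 * (d x) ^ 2 / σsq x := by
      have h1 : B ^ 2 = 4 * C ^ 2 * (d x) ^ 2 * (g x ^ 2) / (σsq x) ^ 2 := by
        rw [hB]; ring
      rw [h1, hgsq x]
      have hσne : σsq x ≠ 0 := (hσpos x).ne'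
      field_simp
    simp only [measure_univ, probReal_univ, ENNReal.toReal_one, one_smul, mul_zero, add_zero, mul_one]
    rw [hBsq]
  -- pointwise key inequality  ψ ≤ φ
  have hd4 : ∀ x, (d x) ^ 2 ≤ 4 := by
    intro x
    have := abs_le.mp (hdbd x)
    nlinarith [this.1, this.2]
  have hkey : ∀ x, ψ x ≤ φ x := by
    intro x
    have hu0 : 0 ≤ (d x) ^ 2 / σsq x := div_nonneg (sq_nonneg _) (hσpos x).le
    have hu4 : (d x) ^ 2 / σsq x ≤ 4 / c₃ :=
      div_le_div₀ (by norm_num) (hd4 x) hc₃0 (hσsqlb x)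
    have h2 : (2:ℝ) ≤ 4 / c₃ := by rw [le_div_iff₀ hc₃0]; linarith
    have hCb : C * (4 / c₃) + 4 * C ≤ 1 := by
      have he : C * (4 / c₃) + 4 * C = (4 / c₃ + 4) * (1 / (2 * (1 + 4 / c₃))) := by
        rw [hCdef]; ring
      have h4c : (0:ℝ) < 4 / c₃ := div_pos (by norm_num) hc₃0
      rw [he, mul_one_div, div_le_one (by linarith)]
      have hr : 2 * (1 + 4 / c₃) - (4 / c₃ + 4) = 4 / c₃ - 2 := by ring
      linarith
    have hC1 : C * ((d x) ^ 2 / σsq x) + 4 * C ≤ 1 := by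
      nlinarith
    have hψe : ψ x = C * ((d x) ^ 2 / σsq x) * (C * ((d x) ^ 2 / σsq x) + 4 * C) := by
      simp only [hψ]; ring
    have hφe : φ x = C * ((d x) ^ 2 / σsq x) := by simp only [hφ]; ring
    rw [hψe, hφe]
    have hcu : 0 ≤ C * (d x ^ 2 / σsq x) := mul_nonneg hC0.le hu0
    exact mul_le_of_le_one_right hcu hC1
  -- μ-integrability of φ and ψ
  have hφm : Measurable φ := by
    simp only [hφ]
    exact (measurable_const.mul (hdm.pow_const 2)).div hσsq
  have hψm : Measurable ψ := by
    simp only [hψ]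
    exact (((measurable_const.mul (hdm.pow_const 2)).div hσsq).pow_const 2).add
      ((measurable_const.mul (hdm.pow_const 2)).div hσsq)
  have hφ0 : ∀ x, 0 ≤ φ x := by
    intro x; simp only [hφ]
    exact div_nonneg (mul_nonneg hC0.le (sq_nonneg _)) (hσpos x).le
  have hφub : ∀ x, φ x ≤ C * (4 / c₃) := by
    intro x
    simp only [hφ, mul_div_assoc]
    exact mul_le_mul_of_nonneg_left
      (div_le_div₀ (by norm_num) (hd4 x) hc₃0 (hσsqlb x)) hC0.le
  have hψ0 : ∀ x, 0 ≤ ψ x := by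
    intro x; simp only [hψ]
    refine add_nonneg (sq_nonneg _) (div_nonneg ?_ (hσpos x).le)
    positivity
  have hφint : Integrable φ μ := by
    refine Integrable.mono' (integrable_const (C * (4 / c₃))) hφm.aestronglyMeasurable ?_
    refine Filter.Eventually.of_forall fun x => ?_
    rw [Real.norm_eq_abs, abs_of_nonneg (hφ0 x)]; exact hφub x
  have hψint : Integrable ψ μ := by
    refine Integrable.mono' (integrable_const (C * (4 / c₃))) hψm.aestronglyMeasurable ?_
    refine Filter.Eventually.of_forall fun x => ?_
    rw [Real.norm_eq_abs, abs_of_nonneg (hψ0 x)]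
    exact le_trans (hkey x) (hφub x)
  -- compute the product integrals
  have hEZ : ∫ q, F q ∂(μ.prod ρ) = ∫ x, φ x ∂μ := by
    rw [integral_prod _ hFint]
    exact integral_congr_ae (Filter.Eventually.of_forall fun x => hinner1 x)
  have hEZ2 : ∫ q, F q ^ 2 ∂(μ.prod ρ) = ∫ x, ψ x ∂μ := by
    rw [integral_prod _ hF2int]
    exact integral_congr_ae (Filter.Eventually.of_forall fun x => hinner2 x)
  rw [hEZ, hEZ2]
  have hmono : ∫ x, ψ x ∂μ ≤ ∫ x, φ x ∂μ := by
    apply integral_mono hψint hφint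
    intro x; exact hkey x
  nlinarith [sq_nonneg (∫ x, φ x ∂μ)]
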